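/- If G is a cubic graph (every vertex of G has degree 3), then the 2-coalition number of G satisfies C_2(G) = 4. -/

import Mathlib

open SimpleGraph

/-- A set `S` is a `k`-dominating set of `G` if every vertex outside `S`
has at least `k` neighbors in `S`. -/
def KDominatingSet {V : Type*} (G : SimpleGraph V) (k : ℕ) (S : Set V) : Prop :=
  ∀ v ∉ S, k ≤ (S ∩ G.neighborSet v).ncard

/-- Two disjoint sets `A` and `B` form a `k`-coalition in `G` if neither is a
`k`-dominating set of `G` but their union is. -/
def KCoalition {V : Type*} (G : SimpleGraph V) (k : ℕ) (A B : Set V) : Prop :=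
  Disjoint A B ∧ ¬ KDominatingSet G k A ∧ ¬ KDominatingSet G k B ∧
    KDominatingSet G k (A ∪ B)

/-- A `k`-coalition partition of `G` is a partition of the vertex set in which every
part is either a `k`-dominating set of cardinality `k` or forms a `k`-coalition with
another part. -/
def KCoalitionPartition {V : Type*} (G : SimpleGraph V) (k : ℕ) (P : Finset (Set V)) : Prop :=
  (∀ A ∈ P, A.Nonempty) ∧
  (P : Set (Set V)).PairwiseDisjoint id ∧
  (⋃ A ∈ P, A) = (Set.univ : Set V) ∧
  ∀ A ∈ P, (KDominatingSet G k A ∧ A.ncard = k) ∨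
    ∃ B ∈ P, B ≠ A ∧ KCoalition G k A B

/-- The `k`-coalition number of `G`: the maximum cardinality of a
`k`-coalition partition of `G`. -/
noncomputable def kCoalitionNumber {V : Type*} (G : SimpleGraph V) (k : ℕ) : ℕ :=
  sSup {n | ∃ P : Finset (Set V), KCoalitionPartition G k P ∧ P.card = n}

/-! ### Auxiliary lemmas -/

lemma bool_flip : ∀ a b : Bool, ((!a) = b) ↔ ¬ (a = b) := by decide
lemma bool_flip' : ∀ a b : Bool, (a = (!b)) ↔ ¬ (b = a) := by decide

lemma kcoal_symm {V : Type*} {G : SimpleGraph V} {k : ℕ} {A B : Set V}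
    (h : KCoalition G k A B) : KCoalition G k B A :=
  ⟨h.1.symm, h.2.2.1, h.2.1, by rw [Set.union_comm]; exact h.2.2.2⟩

lemma ncard_neighborSet_eq_degree {V : Type*} [Fintype V] (G : SimpleGraph V)
    [DecidableRel G.Adj] (v : V) : (G.neighborSet v).ncard = G.degree v := by
  nth_rw 1 [show (G.neighborSet v) = ↑(G.neighborFinset v) from by
    rw [neighborFinset_def]; simp]
  rw [Set.ncard_coe_finset]
  rfl

lemma ncard_union_inter {V : Type*} [Fintype V] (S T N : Set V) (h : Disjoint S T) :
    ((S ∪ T) ∩ N).ncard = (S ∩ N).ncard + (T ∩ N).ncard := by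
  rw [Set.union_inter_distrib_right]
  exact Set.ncard_union_eq (h.mono Set.inter_subset_left Set.inter_subset_left)
    (Set.toFinite _) (Set.toFinite _)

lemma pair_inter_le {V : Type*} [Fintype V] (G : SimpleGraph V) [DecidableRel G.Adj]
    (hN3 : ∀ v : V, (G.neighborSet v).ncard = 3) (S T : Set V) (v : V) (h : Disjoint S T) :
    (S ∩ G.neighborSet v).ncard + (T ∩ G.neighborSet v).ncard ≤ 3 := by
  rw [← ncard_union_inter S T _ h]
  calc ((S ∪ T) ∩ G.neighborSet v).ncard ≤ (G.neighborSet v).ncard :=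
        Set.ncard_le_ncard Set.inter_subset_right (Set.toFinite _)
    _ = 3 := hN3 v

lemma exists_good_coloring {V : Type*} [Fintype V] [DecidableEq V] [Nonempty V]
    (G : SimpleGraph V) [DecidableRel G.Adj]
    (hdeg : ∀ v, G.degree v = 3) :
    ∃ f : V → Bool, ∀ x : V,
      (Finset.univ.filter (fun u => G.Adj x u ∧ f x = f u)).card ≤ 1 := by
  set W : (V → Bool) → ℕ := fun f => ∑ p ∈ Finset.univ ×ˢ Finset.univ,
      (if G.Adj p.1 p.2 ∧ f p.1 = f p.2 then 1 else 0) with hW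
  obtain ⟨f, -, hf⟩ := Finset.exists_min_image (Finset.univ : Finset (V → Bool)) W
      ⟨fun _ => true, Finset.mem_univ _⟩
  refine ⟨f, fun x => ?_⟩
  by_contra hx
  push_neg at hx
  set g : V → Bool := Function.update f x (!f x) with hg
  have hgx : g x = !f x := Function.update_self _ _ _
  have hgu : ∀ u : V, u ≠ x → g u = f u := fun u hu => Function.update_of_ne hu _ _
  set s := (Finset.univ.filter (fun u => G.Adj x u ∧ f x = f u)).card with hs
  set t := (Finset.univ.filter (fun u => G.Adj x u ∧ ¬ f x = f u)).card with ht
  have hst : s + t = 3 := by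
    have h1 : (Finset.univ.filter (fun u => G.Adj x u ∧ f x = f u))
        = (G.neighborFinset x).filter (fun u => f x = f u) := by
      ext u; simp [mem_neighborFinset, and_comm]
    have h2 : (Finset.univ.filter (fun u => G.Adj x u ∧ ¬ f x = f u))
        = (G.neighborFinset x).filter (fun u => ¬ f x = f u) := by
      ext u; simp [mem_neighborFinset, and_comm]
    rw [hs, ht, h1, h2, Finset.card_filter_add_card_filter_not,
      card_neighborFinset_eq_degree, hdeg]
  set Q : V × V → Prop := fun p => p.1 = x ∨ p.2 = x with hQ
  have hsplit : ∀ h : V → Bool, W h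
      = (∑ p ∈ (Finset.univ ×ˢ Finset.univ).filter Q,
          (if G.Adj p.1 p.2 ∧ h p.1 = h p.2 then 1 else 0))
      + (∑ p ∈ (Finset.univ ×ˢ Finset.univ).filter (fun p => ¬ Q p),
          (if G.Adj p.1 p.2 ∧ h p.1 = h p.2 then 1 else 0)) := by
    intro h
    exact (Finset.sum_filter_add_sum_filter_not _ _ _).symm
  have hTeq : (Finset.univ ×ˢ Finset.univ : Finset (V × V)).filter Q
      = ({x} ×ˢ Finset.univ) ∪ ((Finset.univ.erase x) ×ˢ ({x} : Finset V)) := by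
    ext ⟨a, b⟩
    simp only [hQ, Finset.mem_filter, Finset.mem_product, Finset.mem_union,
      Finset.mem_singleton, Finset.mem_univ, Finset.mem_erase, true_and, and_true]
    tauto
  have hdisjT : Disjoint ({x} ×ˢ (Finset.univ : Finset V))
      ((Finset.univ.erase x) ×ˢ ({x} : Finset V)) := by
    rw [Finset.disjoint_left]
    rintro ⟨a, b⟩ h1 h2
    simp only [Finset.mem_product, Finset.mem_singleton, Finset.mem_erase] at h1 h2
    exact h2.1.1 h1.1
  have hT : ∀ h : V → Bool,
      (∑ p ∈ (Finset.univ ×ˢ Finset.univ).filter Q,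
          (if G.Adj p.1 p.2 ∧ h p.1 = h p.2 then 1 else 0))
      = (∑ b : V, if G.Adj x b ∧ h x = h b then 1 else 0)
      + (∑ a ∈ Finset.univ.erase x, if G.Adj a x ∧ h a = h x then 1 else 0) := by
    intro h
    rw [hTeq, Finset.sum_union hdisjT, Finset.sum_product, Finset.sum_product,
      Finset.sum_singleton]
    congr 1
  have hTf : (∑ b : V, (if G.Adj x b ∧ f x = f b then 1 else 0))
      + (∑ a ∈ Finset.univ.erase x, (if G.Adj a x ∧ f a = f x then 1 else 0)) = s + s := by
    congr 1
    · rw [hs, Finset.card_filter]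
    · have : (∑ a ∈ Finset.univ.erase x, if G.Adj a x ∧ f a = f x then 1 else 0)
          + (if G.Adj x x ∧ f x = f x then 1 else 0) = ∑ a : V, if G.Adj a x ∧ f a = f x then 1 else 0 :=
        Finset.sum_erase_add _ _ (Finset.mem_univ x)
      rw [if_neg (by simp)] at this
      rw [add_zero] at this
      rw [this, hs, Finset.card_filter]
      refine Finset.sum_congr rfl fun a _ => ?_
      exact if_congr (and_congr (G.adj_comm a x) eq_comm) rfl rfl
  have hTg : (∑ b : V, (if G.Adj x b ∧ g x = g b then 1 else 0))
      + (∑ a ∈ Finset.univ.erase x, (if G.Adj a x ∧ g a = g x then 1 else 0)) = t + t := by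
    congr 1
    · rw [ht, Finset.card_filter]
      refine Finset.sum_congr rfl fun b _ => ?_
      by_cases hb : b = x
      · subst hb; simp
      · rw [hgx, hgu b hb]
        exact if_congr (and_congr Iff.rfl (bool_flip _ _)) rfl rfl
    · have : (∑ a ∈ Finset.univ.erase x, if G.Adj a x ∧ g a = g x then 1 else 0)
          + (if G.Adj x x ∧ g x = g x then 1 else 0) = ∑ a : V, if G.Adj a x ∧ g a = g x then 1 else 0 :=
        Finset.sum_erase_add _ _ (Finset.mem_univ x)
      rw [if_neg (by simp), add_zero] at this
      rw [this, ht, Finset.card_filter]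
      refine Finset.sum_congr rfl fun a _ => ?_
      by_cases ha : a = x
      · subst ha; simp
      · rw [hgx, hgu a ha]
        exact if_congr (and_congr (G.adj_comm a x) (bool_flip' _ _)) rfl rfl
  have hR : (∑ p ∈ (Finset.univ ×ˢ Finset.univ).filter (fun p => ¬ Q p),
          (if G.Adj p.1 p.2 ∧ g p.1 = g p.2 then 1 else 0))
      = (∑ p ∈ (Finset.univ ×ˢ Finset.univ).filter (fun p => ¬ Q p),
          (if G.Adj p.1 p.2 ∧ f p.1 = f p.2 then 1 else 0)) := by
    refine Finset.sum_congr rfl fun p hp => ?_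
    simp only [Finset.mem_filter, hQ] at hp
    push_neg at hp
    rw [hgu _ hp.2.1, hgu _ hp.2.2]
  have hWf : W f = s + s + (∑ p ∈ (Finset.univ ×ˢ Finset.univ).filter (fun p => ¬ Q p),
          (if G.Adj p.1 p.2 ∧ f p.1 = f p.2 then 1 else 0)) := by
    rw [hsplit f, hT f, hTf]
  have hWg : W g = t + t + (∑ p ∈ (Finset.univ ×ˢ Finset.univ).filter (fun p => ¬ Q p),
          (if G.Adj p.1 p.2 ∧ f p.1 = f p.2 then 1 else 0)) := by
    rw [hsplit g, hT g, hTg, hR]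
  have := hf g (Finset.mem_univ g)
  omega

/-! ### Lower bound: a 2-coalition partition with 4 parts -/

lemma lower_bound {V : Type*} [Fintype V] [Nonempty V] (G : SimpleGraph V)
    [DecidableRel G.Adj] (hcubic : ∀ v : V, G.degree v = 3) :
    ∃ P : Finset (Set V), KCoalitionPartition G 2 P ∧ P.card = 4 := by
  classical
  have hN3 : ∀ v : V, (G.neighborSet v).ncard = 3 := fun v => by
    rw [ncard_neighborSet_eq_degree, hcubic]
  obtain ⟨f, hgood⟩ := exists_good_coloring G hcubic
  have Hsame : ∀ v : V, ({u | f u = f v} ∩ G.neighborSet v).ncard ≤ 1 := by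
    intro v
    have hset : ({u | f u = f v} ∩ G.neighborSet v : Set V)
        = ↑(Finset.univ.filter (fun u => G.Adj v u ∧ f v = f u)) := by
      ext u
      simp only [Set.mem_inter_iff, Set.mem_setOf_eq, mem_neighborSet, Finset.coe_filter,
        Finset.mem_univ, true_and]
      constructor
      · rintro ⟨h1, h2⟩; exact ⟨h2, h1.symm⟩
      · rintro ⟨h1, h2⟩; exact ⟨h2.symm, h1⟩
    rw [hset, Set.ncard_coe_finset]
    exact hgood v
  have Hopp : ∀ v : V, 2 ≤ ({u | f u ≠ f v} ∩ G.neighborSet v).ncard := by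
    intro v
    have hun : ({u | f u = f v} ∩ G.neighborSet v) ∪ ({u | f u ≠ f v} ∩ G.neighborSet v)
        = G.neighborSet v := by
      ext u; by_cases h : f u = f v <;> simp [h]
    have hd : Disjoint ({u | f u = f v} ∩ G.neighborSet v)
        ({u | f u ≠ f v} ∩ G.neighborSet v) := by
      rw [Set.disjoint_left]; rintro u ⟨h1, _⟩ ⟨h2, _⟩; exact h2 h1
    have hadd := Set.ncard_union_eq hd (Set.toFinite _) (Set.toFinite _)
    rw [hun, hN3 v] at hadd
    have := Hsame v
    omega
  have opp2 : ∀ v : V, ∃ u w : V, u ≠ w ∧ f u = !f v ∧ f w = !f v := by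
    intro v
    have h2 := Hopp v
    have h1 : 1 < ({u | f u ≠ f v} ∩ G.neighborSet v).ncard := by omega
    obtain ⟨a, b, ha, hb, hab⟩ := (Set.one_lt_ncard_iff (Set.toFinite _)).mp h1
    exact ⟨a, b, hab, (bool_flip' _ _).mpr (fun h => ha.1 h.symm),
      (bool_flip' _ _).mpr (fun h => hb.1 h.symm)⟩
  have class2 : ∀ b : Bool, ∃ u w : V, u ≠ w ∧ f u = b ∧ f w = b := by
    intro b
    have v := Classical.arbitrary V
    by_cases hv : f v = !b
    · obtain ⟨u, w, h1, h2, h3⟩ := opp2 v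
      rw [hv, Bool.not_not] at h2 h3
      exact ⟨u, w, h1, h2, h3⟩
    · have hfv : f v = b := by cases hb : f v <;> cases b <;> simp_all
      obtain ⟨u, -, -, hu, -⟩ := opp2 v
      obtain ⟨p, q, h1, h2, h3⟩ := opp2 u
      rw [hu, hfv, Bool.not_not] at h2 h3
      exact ⟨p, q, h1, h2, h3⟩
  have ndom : ∀ (S : Set V) (v : V), S ⊆ {u | f u = f v} → v ∉ S →
      ¬ KDominatingSet G 2 S := by
    intro S v hsub hv hdom
    have h2 := hdom v hv
    have hle : (S ∩ G.neighborSet v).ncard ≤ ({u | f u = f v} ∩ G.neighborSet v).ncard :=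
      Set.ncard_le_ncard (Set.inter_subset_inter_left _ hsub) (Set.toFinite _)
    have := Hsame v
    omega
  have domcls : ∀ b : Bool, KDominatingSet G 2 {u | f u = b} := by
    intro b v hv
    have hv' : ¬ (f v = b) := hv
    have hfv : f v = !b := by cases hb : f v <;> cases b <;> simp_all
    have hset : ({u | f u = b} : Set V) = {u | f u ≠ f v} := by
      ext u; rw [Set.mem_setOf_eq, Set.mem_setOf_eq, hfv]
      cases hu : f u <;> cases b <;> simp
    rw [hset]
    exact Hopp v
  have coal : ∀ (b : Bool) (x₀ x₁ : V), x₀ ≠ x₁ → f x₀ = b → f x₁ = b →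
      KCoalition G 2 {x₀} ({u | f u = b} \ {x₀}) := by
    intro b x₀ x₁ hne h0 h1
    refine ⟨Set.disjoint_sdiff_right, ?_, ?_, ?_⟩
    · refine ndom _ x₁ ?_ (by simp [Ne.symm hne])
      intro u hu
      rw [Set.mem_singleton_iff] at hu
      subst hu
      rw [Set.mem_setOf_eq, h0, h1]
    · refine ndom _ x₀ ?_ (by simp)
      intro u hu
      rw [Set.mem_setOf_eq]
      rw [h0]
      exact hu.1
    · rw [Set.union_diff_cancel (by simp [h0])]
      exact domcls b
  obtain ⟨x₀, x₁, hx, hx0, hx1⟩ := class2 true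
  obtain ⟨y₀, y₁, hy, hy0, hy1⟩ := class2 false
  set A : Set V := {x₀} with hA
  set B : Set V := {u | f u = true} \ {x₀} with hB
  set C : Set V := {y₀} with hC
  set D : Set V := {u | f u = false} \ {y₀} with hD
  have hx1B : x₁ ∈ B := ⟨hx1, by simp [Ne.symm hx]⟩
  have hy1D : y₁ ∈ D := ⟨hy1, by simp [Ne.symm hy]⟩
  have dtf : Disjoint ({u | f u = true} : Set V) {u | f u = false} := by
    rw [Set.disjoint_left]; intro u h1 h2; simp_all
  have hAsub : A ⊆ {u | f u = true} := by intro u hu; rw [Set.mem_singleton_iff] at hu; subst hu; exact hx0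
  have hBsub : B ⊆ {u | f u = true} := Set.diff_subset
  have hCsub : C ⊆ {u | f u = false} := by intro u hu; rw [Set.mem_singleton_iff] at hu; subst hu; exact hy0
  have hDsub : D ⊆ {u | f u = false} := Set.diff_subset
  have dAB : Disjoint A B := Set.disjoint_sdiff_right
  have dCD : Disjoint C D := Set.disjoint_sdiff_right
  have dAC : Disjoint A C := dtf.mono hAsub hCsub
  have dAD : Disjoint A D := dtf.mono hAsub hDsub
  have dBC : Disjoint B C := dtf.mono hBsub hCsub
  have dBD : Disjoint B D := dtf.mono hBsub hDsub
  have hneq : ∀ (S T : Set V), Disjoint S T → S.Nonempty → S ≠ T := by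
    rintro S T h hS rfl
    rw [disjoint_self] at h
    rw [h] at hS
    exact Set.not_nonempty_empty hS
  have hAne : A.Nonempty := ⟨x₀, rfl⟩
  have hBne : B.Nonempty := ⟨x₁, hx1B⟩
  have hCne : C.Nonempty := ⟨y₀, rfl⟩
  have hDne : D.Nonempty := ⟨y₁, hy1D⟩
  have nAB : A ≠ B := hneq A B dAB hAne
  have nAC : A ≠ C := hneq A C dAC hAne
  have nAD : A ≠ D := hneq A D dAD hAne
  have nBC : B ≠ C := hneq B C dBC hBne
  have nBD : B ≠ D := hneq B D dBD hBne
  have nCD : C ≠ D := hneq C D dCD hCne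
  have coalAB : KCoalition G 2 A B := coal true x₀ x₁ hx hx0 hx1
  have coalCD : KCoalition G 2 C D := coal false y₀ y₁ hy hy0 hy1
  refine ⟨({A, B, C, D} : Finset (Set V)), ⟨?_, ?_, ?_, ?_⟩, ?_⟩
  · intro S hS
    simp only [Finset.mem_insert, Finset.mem_singleton] at hS
    rcases hS with rfl | rfl | rfl | rfl
    exacts [hAne, hBne, hCne, hDne]
  · intro a ha b hb hab
    simp only [Finset.coe_insert, Set.mem_insert_iff, Finset.coe_singleton,
      Set.mem_singleton_iff] at ha hb
    simp only [id_eq, Function.onFun]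
    rcases ha with rfl | rfl | rfl | rfl <;> rcases hb with rfl | rfl | rfl | rfl <;>
      first
        | exact absurd rfl hab
        | exact dAB | exact dAB.symm | exact dAC | exact dAC.symm | exact dAD
        | exact dAD.symm | exact dBC | exact dBC.symm | exact dBD | exact dBD.symm
        | exact dCD | exact dCD.symm
  · ext v
    simp only [Set.mem_iUnion, Set.mem_univ, iff_true, Finset.mem_insert,
      Finset.mem_singleton, exists_prop]
    by_cases hv : f v = true
    · by_cases hv0 : v = x₀
      · exact ⟨A, Or.inl rfl, by rw [hv0]; exact rfl⟩
      · exact ⟨B, Or.inr (Or.inl rfl), ⟨hv, hv0⟩⟩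
    · have hv' : f v = false := by cases h : f v <;> simp_all
      by_cases hv0 : v = y₀
      · exact ⟨C, Or.inr (Or.inr (Or.inl rfl)), by rw [hv0]; exact rfl⟩
      · exact ⟨D, Or.inr (Or.inr (Or.inr rfl)), ⟨hv', hv0⟩⟩
  · intro S hS
    right
    simp only [Finset.mem_insert, Finset.mem_singleton] at hS
    rcases hS with rfl | rfl | rfl | rfl
    · exact ⟨B, by simp, nAB.symm, coalAB⟩
    · exact ⟨A, by simp, nAB, kcoal_symm coalAB⟩
    · exact ⟨D, by simp, nCD.symm, coalCD⟩
    · exact ⟨C, by simp, nCD, kcoal_symm coalCD⟩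
  · rw [Finset.card_insert_of_notMem (by simp [nAB, nAC, nAD]),
      Finset.card_insert_of_notMem (by simp [nBC, nBD]),
      Finset.card_insert_of_notMem (by simp [nCD]), Finset.card_singleton]

section
variable {V : Type*} [Fintype V]

lemma sum_ncard_parts (P : Finset (Set V)) :
    (↑P : Set (Set V)).PairwiseDisjoint id → (⋃ A ∈ P, A).ncard = ∑ A ∈ P, A.ncard := by
  classical
  induction P using Finset.induction_on with
  | empty => simp
  | @insert a s ha ih =>
    intro hdisj
    have hsub : (↑s : Set (Set V)) ⊆ ↑(insert a s) := by
      intro x hx; simp only [Finset.coe_insert, Set.mem_insert_iff]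
      right; exact hx
    rw [Finset.set_biUnion_insert, Finset.sum_insert ha]
    have hd : Disjoint a (⋃ B ∈ s, B) := by
      rw [Set.disjoint_iUnion_right]
      intro B
      rw [Set.disjoint_iUnion_right]
      intro hB
      exact hdisj (by simp) (hsub hB) (fun h => ha (h ▸ hB))
    rw [Set.ncard_union_eq hd (Set.toFinite _) (Set.toFinite _), ih (hdisj.subset hsub)]

lemma star3 (G : SimpleGraph V) [DecidableRel G.Adj]
    (hN3 : ∀ v : V, (G.neighborSet v).ncard = 3)
    {A X Y Z : Set V}
    (dAX : Disjoint A X) (dAY : Disjoint A Y) (dAZ : Disjoint A Z)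
    (dXY : Disjoint X Y) (dXZ : Disjoint X Z) (dYZ : Disjoint Y Z)
    (hX : KDominatingSet G 2 (A ∪ X)) (hY : KDominatingSet G 2 (A ∪ Y))
    (hZ : KDominatingSet G 2 (A ∪ Z))
    {v : V} (hvA : v ∉ A) (hvX : v ∉ X) (hvY : v ∉ Y) (hvZ : v ∉ Z)
    (ha : (A ∩ G.neighborSet v).ncard ≤ 1) : False := by
  have gX := hX v (by simp [hvA, hvX])
  have gY := hY v (by simp [hvA, hvY])
  have gZ := hZ v (by simp [hvA, hvZ])
  rw [ncard_union_inter _ _ _ dAX] at gX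
  rw [ncard_union_inter _ _ _ dAY] at gY
  rw [ncard_union_inter _ _ _ dAZ] at gZ
  have tot := pair_inter_le G hN3 (A ∪ X) (Y ∪ Z) v
    (by rw [Set.disjoint_union_left, Set.disjoint_union_right, Set.disjoint_union_right]
        exact ⟨⟨dAY, dAZ⟩, dXY, dXZ⟩)
  rw [ncard_union_inter _ _ _ dAX, ncard_union_inter _ _ _ dYZ] at tot
  omega

lemma upper_bound [Nonempty V] (G : SimpleGraph V) [DecidableRel G.Adj]
    (hcubic : ∀ v : V, G.degree v = 3) (P : Finset (Set V))
    (hP : KCoalitionPartition G 2 P) : P.card ≤ 4 := by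
  classical
  have hN3 : ∀ v : V, (G.neighborSet v).ncard = 3 := fun v => by
    rw [ncard_neighborSet_eq_degree, hcubic]
  by_contra hcard
  push_neg at hcard
  obtain ⟨hne, hdisj, huniv, hpart⟩ := hP
  have hdj : ∀ A ∈ P, ∀ B ∈ P, A ≠ B → Disjoint A B := by
    intro A hA B hB hAB
    exact hdisj (by simpa using hA) (by simpa using hB) hAB
  -- total count
  have hsum : ∑ B ∈ P, B.ncard = Nat.card V := by
    rw [← sum_ncard_parts P hdisj, huniv, Set.ncard_univ]
  -- Step A : every part has a partner
  have partner : ∀ A ∈ P, ∃ B ∈ P, B ≠ A ∧ KCoalition G 2 A B := by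
    intro A hA
    rcases hpart A hA with ⟨hdom, h2⟩ | h
    · exfalso
      obtain ⟨a, b, hab, hAab⟩ := Set.ncard_eq_two.mp h2
      have hsub : (Aᶜ : Set V) ⊆ G.neighborSet a := by
        intro v hv
        have h2' := hdom v hv
        have heq : A ∩ G.neighborSet v = A :=
          Set.eq_of_subset_of_ncard_le Set.inter_subset_left (by rw [h2]; exact h2')
            (Set.toFinite _)
        have haA : a ∈ A := by rw [hAab]; exact Set.mem_insert a {b}
        have : a ∈ A ∩ G.neighborSet v := by rw [heq]; exact haA
        exact (this.2 : G.Adj v a).symm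
      have hc : (Aᶜ : Set V).ncard ≤ 3 :=
        le_trans (Set.ncard_le_ncard hsub (Set.toFinite _)) (le_of_eq (hN3 a))
      have hcompl := Set.ncard_add_ncard_compl A
      -- |V| ≥ 6
      have herase : ∑ B ∈ P.erase A, B.ncard + A.ncard = ∑ B ∈ P, B.ncard :=
        Finset.sum_erase_add _ _ hA
      have hone : (P.erase A).card • 1 ≤ ∑ B ∈ P.erase A, B.ncard := by
        apply Finset.card_nsmul_le_sum
        intro B hB
        have hBP : B ∈ P := Finset.mem_of_mem_erase hB
        have := hne B hBP
        have := (Set.ncard_pos (Set.toFinite B)).mpr this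
        omega
      rw [smul_eq_mul, mul_one] at hone
      have hcarde : (P.erase A).card = P.card - 1 := Finset.card_erase_of_mem hA
      omega
    · exact h
  -- Step B : any two coalitions (among parts) share a part
  have noTwo : ∀ A ∈ P, ∀ B ∈ P, ∀ C ∈ P, ∀ D ∈ P,
      A ≠ B → A ≠ C → A ≠ D → B ≠ C → B ≠ D → C ≠ D →
      KCoalition G 2 A B → KCoalition G 2 C D → False := by
    intro A hA B hB C hC D hD nAB nAC nAD nBC nBD nCD h1 h2
    have hQcard : ({A, B, C, D} : Finset (Set V)).card ≤ 4 := by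
      have c1 := Finset.card_insert_le A ({B, C, D} : Finset (Set V))
      have c2 := Finset.card_insert_le B ({C, D} : Finset (Set V))
      have c3 := Finset.card_insert_le C ({D} : Finset (Set V))
      have c4 : ({D} : Finset (Set V)).card = 1 := Finset.card_singleton D
      omega
    have hEex : (P \ ({A, B, C, D} : Finset (Set V))).Nonempty := by
      rw [← Finset.card_pos]
      have := Finset.le_card_sdiff ({A, B, C, D} : Finset (Set V)) P
      omega
    obtain ⟨E, hE⟩ := hEex
    rw [Finset.mem_sdiff] at hE
    obtain ⟨hEP, hEnm⟩ := hE
    simp only [Finset.mem_insert, Finset.mem_singleton, not_or] at hEnm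
    obtain ⟨nEA, nEB, nEC, nED⟩ := hEnm
    obtain ⟨v, hv⟩ := hne E hEP
    have hvA : v ∉ A := fun h => (hdj E hEP A hA nEA).le_bot ⟨hv, h⟩
    have hvB : v ∉ B := fun h => (hdj E hEP B hB nEB).le_bot ⟨hv, h⟩
    have hvC : v ∉ C := fun h => (hdj E hEP C hC nEC).le_bot ⟨hv, h⟩
    have hvD : v ∉ D := fun h => (hdj E hEP D hD nED).le_bot ⟨hv, h⟩
    have g1 := h1.2.2.2 v (by simp [hvA, hvB])
    have g2 := h2.2.2.2 v (by simp [hvC, hvD])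
    have tot := pair_inter_le G hN3 (A ∪ B) (C ∪ D) v
      (by rw [Set.disjoint_union_left, Set.disjoint_union_right, Set.disjoint_union_right]
          exact ⟨⟨hdj A hA C hC nAC, hdj A hA D hD nAD⟩,
            hdj B hB C hC nBC, hdj B hB D hD nBD⟩)
    omega
  -- Step C : extract a star with centre A and four leaves
  obtain ⟨A₁, hA₁⟩ := Finset.card_pos.mp (by omega : 0 < P.card)
  obtain ⟨B₁, hB₁P, nB₁A₁, c₁⟩ := partner A₁ hA₁
  have hX₂ex : (P \ ({A₁, B₁} : Finset (Set V))).Nonempty := by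
    rw [← Finset.card_pos]
    have := Finset.le_card_sdiff ({A₁, B₁} : Finset (Set V)) P
    have h2 : ({A₁, B₁} : Finset (Set V)).card ≤ 2 := by
      have := Finset.card_insert_le A₁ ({B₁} : Finset (Set V))
      have : ({B₁} : Finset (Set V)).card = 1 := Finset.card_singleton B₁
      omega
    omega
  obtain ⟨X₂, hX₂⟩ := hX₂ex
  rw [Finset.mem_sdiff] at hX₂
  obtain ⟨hX₂P, hX₂nm⟩ := hX₂
  simp only [Finset.mem_insert, Finset.mem_singleton, not_or] at hX₂nm
  obtain ⟨nX₂A₁, nX₂B₁⟩ := hX₂nm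
  obtain ⟨Y₂, hY₂P, nY₂X₂, c₂⟩ := partner X₂ hX₂P
  have hY₂ : Y₂ = A₁ ∨ Y₂ = B₁ := by
    by_contra hcon
    push_neg at hcon
    exact noTwo A₁ hA₁ B₁ hB₁P X₂ hX₂P Y₂ hY₂P
      (Ne.symm nB₁A₁) (Ne.symm nX₂A₁) (fun h => hcon.1 h.symm)
      (Ne.symm nX₂B₁) (fun h => hcon.2 h.symm) (Ne.symm nY₂X₂) c₁ c₂
  -- get A B C with coalitions (A,B) (A,C)
  obtain ⟨A, B, C, hAP, hBP, hCP, nAB, nAC, nBC, cAB, cAC⟩ :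
      ∃ A B C : Set V, A ∈ P ∧ B ∈ P ∧ C ∈ P ∧ A ≠ B ∧ A ≠ C ∧ B ≠ C ∧
        KCoalition G 2 A B ∧ KCoalition G 2 A C := by
    rcases hY₂ with rfl | rfl
    · exact ⟨Y₂, B₁, X₂, hY₂P, hB₁P, hX₂P, Ne.symm nB₁A₁, Ne.symm nX₂A₁,
        Ne.symm nX₂B₁, c₁, kcoal_symm c₂⟩
    · exact ⟨Y₂, A₁, X₂, hY₂P, hA₁, hX₂P, nB₁A₁, Ne.symm nX₂B₁,
        (Ne.symm nX₂A₁), kcoal_symm c₁, kcoal_symm c₂⟩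
  -- all further parts pair with A
  have hubpartner : ∀ E ∈ P, E ≠ A → E ≠ B → E ≠ C → KCoalition G 2 A E := by
    intro E hEP nEA nEB nEC
    obtain ⟨Z, hZP, nZE, cEZ⟩ := partner E hEP
    have hZA : Z = A := by
      by_contra hZA
      have hZB : Z = B := by
        by_contra hZB
        exact noTwo A hAP B hBP E hEP Z hZP nAB (Ne.symm nEA)
          (fun h => hZA h.symm) (Ne.symm nEB) (fun h => hZB h.symm) (Ne.symm nZE) cAB cEZ
      subst hZB
      exact noTwo A hAP C hCP E hEP Z hZP nAC (Ne.symm nEA) nAB (Ne.symm nEC)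
        (Ne.symm nBC) (Ne.symm nZE) cAC cEZ
    subst hZA
    exact kcoal_symm cEZ
  -- pick D and E
  have hDex : (P \ ({A, B, C} : Finset (Set V))).Nonempty := by
    rw [← Finset.card_pos]
    have := Finset.le_card_sdiff ({A, B, C} : Finset (Set V)) P
    have h3 : ({A, B, C} : Finset (Set V)).card ≤ 3 := by
      have := Finset.card_insert_le A ({B, C} : Finset (Set V))
      have := Finset.card_insert_le B ({C} : Finset (Set V))
      have : ({C} : Finset (Set V)).card = 1 := Finset.card_singleton C
      omega
    omega
  obtain ⟨D, hD⟩ := hDex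
  rw [Finset.mem_sdiff] at hD
  obtain ⟨hDP, hDnm⟩ := hD
  simp only [Finset.mem_insert, Finset.mem_singleton, not_or] at hDnm
  obtain ⟨nDA, nDB, nDC⟩ := hDnm
  have cAD : KCoalition G 2 A D := hubpartner D hDP nDA nDB nDC
  have hEex : (P \ ({A, B, C, D} : Finset (Set V))).Nonempty := by
    rw [← Finset.card_pos]
    have := Finset.le_card_sdiff ({A, B, C, D} : Finset (Set V)) P
    have h4 : ({A, B, C, D} : Finset (Set V)).card ≤ 4 := by
      have := Finset.card_insert_le A ({B, C, D} : Finset (Set V))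
      have := Finset.card_insert_le B ({C, D} : Finset (Set V))
      have := Finset.card_insert_le C ({D} : Finset (Set V))
      have : ({D} : Finset (Set V)).card = 1 := Finset.card_singleton D
      omega
    omega
  obtain ⟨E, hE⟩ := hEex
  rw [Finset.mem_sdiff] at hE
  obtain ⟨hEP, hEnm⟩ := hE
  simp only [Finset.mem_insert, Finset.mem_singleton, not_or] at hEnm
  obtain ⟨nEA, nEB, nEC, nED⟩ := hEnm
  have cAE : KCoalition G 2 A E := hubpartner E hEP nEA nEB nEC
  -- Step D : star contradiction
  have dBC : Disjoint B C := hdj B hBP C hCP nBC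
  have dBD : Disjoint B D := hdj B hBP D hDP (Ne.symm nDB)
  have dBE : Disjoint B E := hdj B hBP E hEP (Ne.symm nEB)
  have dCD : Disjoint C D := hdj C hCP D hDP (Ne.symm nDC)
  have dCE : Disjoint C E := hdj C hCP E hEP (Ne.symm nEC)
  have dDE : Disjoint D E := hdj D hDP E hEP (Ne.symm nED)
  have dAB : Disjoint A B := hdj A hAP B hBP nAB
  have dAC : Disjoint A C := hdj A hAP C hCP nAC
  have dAD : Disjoint A D := hdj A hAP D hDP (Ne.symm nDA)
  have dAE : Disjoint A E := hdj A hAP E hEP (Ne.symm nEA)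
  -- A is not 2-dominating
  have hndA : ¬ KDominatingSet G 2 A := cAB.2.1
  rw [KDominatingSet] at hndA
  push_neg at hndA
  obtain ⟨v, hvA, hlt⟩ := hndA
  have ha : (A ∩ G.neighborSet v).ncard ≤ 1 := by omega
  by_cases hvB : v ∈ B
  · exact star3 G hN3 dAC dAD dAE dCD dCE dDE cAC.2.2.2 cAD.2.2.2 cAE.2.2.2 hvA
      (fun h => dBC.le_bot ⟨hvB, h⟩) (fun h => dBD.le_bot ⟨hvB, h⟩)
      (fun h => dBE.le_bot ⟨hvB, h⟩) ha
  by_cases hvC : v ∈ C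
  · exact star3 G hN3 dAB dAD dAE dBD dBE dDE cAB.2.2.2 cAD.2.2.2 cAE.2.2.2 hvA
      (fun h => dBC.le_bot ⟨h, hvC⟩) (fun h => dCD.le_bot ⟨hvC, h⟩)
      (fun h => dCE.le_bot ⟨hvC, h⟩) ha
  by_cases hvD : v ∈ D
  · exact star3 G hN3 dAB dAC dAE dBC dBE dCE cAB.2.2.2 cAC.2.2.2 cAE.2.2.2 hvA
      hvB hvC (fun h => dDE.le_bot ⟨hvD, h⟩) ha
  by_cases hvE : v ∈ E
  · exact star3 G hN3 dAB dAC dAD dBC dBD dCD cAB.2.2.2 cAC.2.2.2 cAD.2.2.2 hvA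
      hvB hvC hvD ha
  · exact star3 G hN3 dAB dAC dAD dBC dBD dCD cAB.2.2.2 cAC.2.2.2 cAD.2.2.2 hvA
      hvB hvC hvD ha

end

theorem c2_cubic {V : Type*} [Fintype V] [Nonempty V] (G : SimpleGraph V)
    [DecidableRel G.Adj] (hcubic : ∀ v : V, G.degree v = 3) :
    kCoalitionNumber G 2 = 4 := by
  classical
  obtain ⟨P₀, hP₀, hc₀⟩ := lower_bound G hcubic
  have hub : ∀ n ∈ {n | ∃ P : Finset (Set V), KCoalitionPartition G 2 P ∧ P.card = n}, n ≤ 4 := by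
    rintro n ⟨P, hP, rfl⟩
    exact upper_bound G hcubic P hP
  have hmem : (4 : ℕ) ∈ {n | ∃ P : Finset (Set V), KCoalitionPartition G 2 P ∧ P.card = n} :=
    ⟨P₀, hP₀, hc₀⟩
  exact le_antisymm (csSup_le ⟨4, hmem⟩ hub) (le_csSup ⟨4, hub⟩ hmem)
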